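/- Let R be a head-finite ring and let ε ∈ R. Then there exists α ∈ R such that 1 + ε + α·ε² is a unit of R. -/

import Mathlib

/-- The head `R/J(R)` of a ring `R`: the quotient of `R` by its Jacobson radical
(the intersection of all maximal left ideals, which is a two-sided ideal). -/
abbrev RingHead (R : Type*) [Ring R] : Type _ :=
  (TwoSidedIdeal.jacobson (⊥ : TwoSidedIdeal R)).ringCon.Quotient

/-- A ring `R` is *head-finite* if its head `R/J(R)` is a semisimple ring and, for every
simple `R/J(R)`-module `M`, the division ring `End_{R/J(R)}(M)` is finite-dimensional over
its center.  (By Artin–Wedderburn, this says exactly that in the Wedderburn decomposition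
`R/J(R) ≅ ∏ Mat_{k i}(D i)`, each skew field `D i` is finite-dimensional over its center.) -/
def IsHeadFinite (R : Type u) [Ring R] : Prop :=
  IsSemisimpleRing (RingHead R) ∧
    ∀ (M : Type u) (_ : AddCommGroup M) (_ : Module (RingHead R) M),
      IsSimpleModule (RingHead R) M →
        Module.Finite (Subring.center (Module.End (RingHead R) M))
          (Module.End (RingHead R) M)



section SemisimplePart

variable {S : Type v} [Ring S]

/-- Right multiplication by `ε` as an endomorphism of the left module `S`. -/
private def rmul (ε : S) : S →ₗ[S] S where
  toFun x := x * ε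
  map_add' x y := add_mul x y ε
  map_smul' s x := by simp [smul_eq_mul, mul_assoc]

private lemma rmul_pow (ε : S) : ∀ (n : ℕ) (x : S), ((rmul ε) ^ n) x = x * ε ^ n
  | 0, x => by simp
  | n + 1, x => by
    rw [pow_succ', Module.End.mul_apply]
    show ((rmul ε ^ n) x) * ε = x * ε ^ (n + 1)
    rw [rmul_pow ε n, mul_assoc, ← pow_succ]

/-- The key lemma in an artinian & noetherian (e.g. semisimple) ring. -/
private theorem key [IsArtinianRing S] [IsNoetherianRing S] (ε : S) :
    ∃ α : S, IsUnit (1 + ε + α * ε ^ 2) := by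
  set f := rmul ε with hf
  have hev := ((Module.End.eventually_disjoint_ker_pow_range_pow f |>.and
      f.eventually_codisjoint_ker_pow_range_pow).and
      (f.eventually_iSup_ker_pow_eq.and f.eventually_iInf_range_pow_eq)).and
      (Filter.eventually_ge_atTop 1)
  obtain ⟨N, hN⟩ := Filter.eventually_atTop.mp hev
  obtain ⟨⟨⟨hdis, hcodis⟩, hker, hrange⟩, hN1⟩ := hN N le_rfl
  obtain ⟨⟨⟨-, -⟩, hker', hrange'⟩, -⟩ := hN (N + 1) (Nat.le_succ N)
  have kerEq : LinearMap.ker (f ^ N) = LinearMap.ker (f ^ (N + 1)) := by rw [← hker, ← hker']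
  have rangeEq : LinearMap.range (f ^ N) = LinearMap.range (f ^ (N + 1)) := by
    rw [← hrange, ← hrange']
  have h1mem : (1 : S) ∈ LinearMap.ker (f ^ N) ⊔ LinearMap.range (f ^ N) := by
    rw [codisjoint_iff.mp hcodis]; trivial
  obtain ⟨k, hk, e, he, hke⟩ := Submodule.mem_sup.mp h1mem
  have mem_ker : ∀ x : S, x ∈ LinearMap.ker (f ^ N) ↔ x * ε ^ N = 0 := fun x => by
    rw [LinearMap.mem_ker, rmul_pow]
  have hVe : ∀ x ∈ LinearMap.range (f ^ N), x * e = x := by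
    intro x hx
    have h1 : x * k ∈ LinearMap.ker (f ^ N) := by
      simpa [smul_eq_mul] using (LinearMap.ker (f ^ N)).smul_mem x hk
    have h2 : x * e ∈ LinearMap.range (f ^ N) := by
      simpa [smul_eq_mul] using (LinearMap.range (f ^ N)).smul_mem x he
    have hsum : x * k + x * e = x := by rw [← mul_add, hke, mul_one]
    have h3 : x * k ∈ LinearMap.range (f ^ N) := by
      rw [eq_sub_of_add_eq hsum]; exact Submodule.sub_mem _ hx h2
    have h0 : x * k = 0 := Submodule.disjoint_def.mp hdis _ h1 h3
    rwa [h0, zero_add] at hsum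
  have hKe : ∀ x ∈ LinearMap.ker (f ^ N), x * e = 0 := by
    intro x hx
    have h1 : x * k ∈ LinearMap.ker (f ^ N) := by
      simpa [smul_eq_mul] using (LinearMap.ker (f ^ N)).smul_mem x hk
    have h2 : x * e ∈ LinearMap.range (f ^ N) := by
      simpa [smul_eq_mul] using (LinearMap.range (f ^ N)).smul_mem x he
    have hsum : x * k + x * e = x := by rw [← mul_add, hke, mul_one]
    have h3 : x * e ∈ LinearMap.ker (f ^ N) := by
      have : x * e = x - x * k := eq_sub_of_add_eq (by rw [add_comm]; exact hsum)
      rw [this]; exact Submodule.sub_mem _ hx h1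
    exact Submodule.disjoint_def.mp hdis _ h3 h2
  have he2 : e * e = e := hVe e he
  have hk2 : k = 1 - e := eq_sub_of_add_eq hke
  -- e * ε lies in the range, k * ε lies in the kernel
  have hεe_mem : e * ε ∈ LinearMap.range (f ^ N) := by
    rw [rangeEq] at he ⊢
    obtain ⟨y, hy⟩ := he
    rw [rmul_pow] at hy
    refine ⟨y * ε, ?_⟩
    rw [rmul_pow, ← hy, mul_assoc, mul_assoc, ← pow_succ', pow_succ]
  have hkε_mem : k * ε ∈ LinearMap.ker (f ^ N) := by
    rw [mem_ker, mul_assoc, ← pow_succ']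
    have := kerEq ▸ hk
    rw [LinearMap.mem_ker, rmul_pow] at this
    exact this
  have hcomm : ε * e = e * ε := by
    have hdecomp : k * ε + e * ε = ε := by rw [← add_mul, hke, one_mul]
    calc ε * e = (k * ε + e * ε) * e := by rw [hdecomp]
    _ = k * ε * e + e * ε * e := by rw [add_mul]
    _ = 0 + e * ε := by rw [hKe _ hkε_mem, hVe _ hεe_mem]
    _ = e * ε := by rw [zero_add]
  have hkcomm : k * ε = ε * k := by
    rw [hk2, sub_mul, one_mul, mul_sub, mul_one, hcomm]
  have hkidem : k * k = k := by
    rw [hk2, sub_mul, one_mul, mul_sub, mul_one, he2]; abel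
  have hkpow : ∀ m : ℕ, k ^ (m + 1) = k := by
    intro m; induction m with
    | zero => simp
    | succ m ih => rw [pow_succ, ih, hkidem]
  have nilp : IsNilpotent (k * ε) := by
    refine ⟨N, ?_⟩
    have hc : Commute k ε := hkcomm
    rw [hc.mul_pow]
    obtain ⟨m, rfl⟩ := Nat.exists_eq_add_of_le' hN1
    rw [hkpow m]
    exact (mem_ker k).mp hk
  -- produce α
  have he' : e ∈ LinearMap.range (f ^ (N + 1)) := rangeEq ▸ he
  obtain ⟨z, hz⟩ := he'
  rw [rmul_pow] at hz
  refine ⟨-(z * ε ^ N), ?_⟩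
  have h1 : z * ε ^ N * ε ^ 2 = e * ε := by
    rw [← hz, mul_assoc, mul_assoc, ← pow_add, ← pow_succ]
  have heq : 1 + ε + -(z * ε ^ N) * ε ^ 2 = 1 + k * ε := by
    rw [neg_mul, h1, hk2]; noncomm_ring
  rw [heq]
  exact nilp.isUnit_one_add

end SemisimplePart

section JacobsonPart

variable {R : Type u} [Ring R]

private lemma jac_unit {x : R} (hx : x ∈ Ideal.jacobson (⊥ : Ideal R)) : IsUnit (1 + x) := by
  obtain ⟨s, hs⟩ := Ideal.exists_mul_add_sub_mem_of_mem_jacobson x hx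
  rw [Ideal.mem_bot, sub_eq_zero] at hs
  -- hs : s * (x + 1) = 1
  have hsx : -(s * x) ∈ Ideal.jacobson (⊥ : Ideal R) := by
    exact Submodule.neg_mem _ (by simpa [smul_eq_mul] using
      (Ideal.jacobson (⊥ : Ideal R)).smul_mem s hx)
  obtain ⟨t, ht⟩ := Ideal.exists_mul_add_sub_mem_of_mem_jacobson _ hsx
  rw [Ideal.mem_bot, sub_eq_zero] at ht
  -- ht : t * (-(s*x) + 1) = 1
  have hs' : s = -(s * x) + 1 := by
    have : s * x + s = 1 := by rw [← hs]; noncomm_ring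
    rw [← this]; abel
  rw [← hs'] at ht  -- t * s = 1
  have hts : t = x + 1 := by
    calc t = t * (s * (x + 1)) := by rw [hs, mul_one]
    _ = (t * s) * (x + 1) := by rw [mul_assoc]
    _ = x + 1 := by rw [ht, one_mul]
  have h2 : (x + 1) * s = 1 := by rw [← hts]; exact ht
  rw [add_comm]
  exact ⟨⟨x + 1, s, h2, hs⟩, rfl⟩

private lemma head_unit_lift {r : R}
    (h : IsUnit ((r : (TwoSidedIdeal.jacobson (⊥ : TwoSidedIdeal R)).ringCon.Quotient))) :
    IsUnit r := by
  set I := TwoSidedIdeal.jacobson (⊥ : TwoSidedIdeal R) with hI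
  have hbot : TwoSidedIdeal.asIdeal (⊥ : TwoSidedIdeal R) = ⊥ := by
    ext x
    simp [TwoSidedIdeal.mem_asIdeal]
  have memJ : ∀ x : R, x ∈ I → x ∈ Ideal.jacobson (⊥ : Ideal R) := by
    intro x hx
    have : x ∈ TwoSidedIdeal.asIdeal I := TwoSidedIdeal.mem_asIdeal.mpr hx
    rwa [hI, TwoSidedIdeal.asIdeal_jacobson, hbot] at this
  obtain ⟨u, hu⟩ := h
  obtain ⟨s, hs⟩ := Quotient.mk''_surjective (↑u⁻¹ : I.ringCon.Quotient)
  have hs' : (s : I.ringCon.Quotient) = ↑u⁻¹ := hs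
  have h1 : ((s * r : R) : I.ringCon.Quotient) = ((1 : R) : I.ringCon.Quotient) := by
    rw [RingCon.coe_mul, hs', ← hu, RingCon.coe_one]
    exact u.inv_mul
  have h2 : ((r * s : R) : I.ringCon.Quotient) = ((1 : R) : I.ringCon.Quotient) := by
    rw [RingCon.coe_mul, hs', ← hu, RingCon.coe_one]
    exact u.mul_inv
  have m1 : s * r - 1 ∈ Ideal.jacobson (⊥ : Ideal R) :=
    memJ _ ((TwoSidedIdeal.rel_iff I _ _).mp (I.ringCon.eq.mp h1))
  have m2 : r * s - 1 ∈ Ideal.jacobson (⊥ : Ideal R) :=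
    memJ _ ((TwoSidedIdeal.rel_iff I _ _).mp (I.ringCon.eq.mp h2))
  have u1 : IsUnit (s * r) := by
    have := jac_unit m1; rwa [add_sub_cancel] at this
  have u2 : IsUnit (r * s) := by
    have := jac_unit m2; rwa [add_sub_cancel] at this
  obtain ⟨⟨a, b, hab, hba⟩, ha⟩ := u1
  obtain ⟨⟨c, d, hcd, hdc⟩, hc⟩ := u2
  -- b * (s * r) = 1 and (r * s) * d = 1
  have left : (b * s) * r = 1 := by rw [mul_assoc, ← ha]; exact hba
  have right : r * (s * d) = 1 := by rw [← mul_assoc, ← hc]; exact hcd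
  have : b * s = s * d := by
    calc b * s = (b * s) * (r * (s * d)) := by rw [right, mul_one]
    _ = ((b * s) * r) * (s * d) := by noncomm_ring
    _ = s * d := by rw [left, one_mul]
  exact ⟨⟨r, s * d, right, by rw [← this]; exact left⟩, rfl⟩

end JacobsonPart

/-- Let `R` be a head-finite ring and `ε ∈ R`.  Then there exists `α ∈ R` such that
`1 + ε + α·ε²` is a unit of `R`. -/
theorem exists_unit_one_add_add_mul_sq (R : Type u) [Ring R] (hR : IsHeadFinite R)
    (ε : R) : ∃ α : R, IsUnit (1 + ε + α * ε ^ 2) := by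
  haveI : IsSemisimpleRing (RingHead R) := hR.1
  obtain ⟨α', hα'⟩ :=
    key ((ε : (TwoSidedIdeal.jacobson (⊥ : TwoSidedIdeal R)).ringCon.Quotient))
  obtain ⟨α, hα⟩ := Quotient.mk''_surjective α'
  have hα2 : ((α : R) : (TwoSidedIdeal.jacobson (⊥ : TwoSidedIdeal R)).ringCon.Quotient) = α' := hα
  refine ⟨α, head_unit_lift ?_⟩
  have hcast : ((1 + ε + α * ε ^ 2 : R) :
      (TwoSidedIdeal.jacobson (⊥ : TwoSidedIdeal R)).ringCon.Quotient)
      = 1 + (ε : (TwoSidedIdeal.jacobson (⊥ : TwoSidedIdeal R)).ringCon.Quotient)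
        + α' * (ε : (TwoSidedIdeal.jacobson (⊥ : TwoSidedIdeal R)).ringCon.Quotient) ^ 2 := by
    rw [RingCon.coe_add, RingCon.coe_add, RingCon.coe_one, RingCon.coe_mul, ← hα2,
      pow_two, pow_two, RingCon.coe_mul]
  rw [hcast]
  exact hα'
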